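/- arXiv:0906.0453 — 3 statements merged into one kernel-verified Lean document; each statement's English description precedes it below -/
import Mathlib

section
/- Let U be a nonempty convex subset of a separated locally convex space X with qri(U) ≠ ∅. Then cl(cone(qri(U))) = cl(cone(U)). -/
open Set Pointwise Topology

/-- The conic hull: cone(S) = ⋃_{t ≥ 0} t • S. -/
def coneHull {E : Type*} [AddCommGroup E] [Module ℝ E] (S : Set E) : Set E :=
  {x | ∃ t : ℝ, 0 ≤ t ∧ ∃ s ∈ S, x = t • s}

/-- The quasi-relative interior. -/
def qri {E : Type*} [AddCommGroup E] [Module ℝ E] [TopologicalSpace E] (U : Set E) : Set E :=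
  {x | x ∈ U ∧ ∃ M : Submodule ℝ E, closure (coneHull (U - {x})) = (M : Set E)}

/-- The quasi interior. -/
def qi {E : Type*} [AddCommGroup E] [Module ℝ E] [TopologicalSpace E] (U : Set E) : Set E :=
  {x | x ∈ U ∧ closure (coneHull (U - {x})) = Set.univ}

/-- The algebraic interior (core). -/
def algCore {E : Type*} [AddCommGroup E] [Module ℝ E] (U : Set E) : Set E :=
  {x | x ∈ U ∧ coneHull (U - {x}) = Set.univ}

/-- The relative algebraic interior (intrinsic core). -/
def icr {E : Type*} [AddCommGroup E] [Module ℝ E] (U : Set E) : Set E :=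
  {x | x ∈ U ∧ ∃ M : Submodule ℝ E, coneHull (U - {x}) = (M : Set E)}

/-- The strong quasi-relative interior. -/
def sqri {E : Type*} [AddCommGroup E] [Module ℝ E] [TopologicalSpace E] (U : Set E) : Set E :=
  {x | x ∈ U ∧ ∃ M : Submodule ℝ E, coneHull (U - {x}) = (M : Set E) ∧ IsClosed (M : Set E)}

/-- The normal cone of U at x. -/
def normalCone {E : Type*} [AddCommGroup E] [Module ℝ E] [TopologicalSpace E]
    (U : Set E) (x : E) : Set (E →L[ℝ] ℝ) :=
  {f | ∀ y ∈ U, f (y - x) ≤ 0}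

lemma mem_coneHull_of_mem {E : Type*} [AddCommGroup E] [Module ℝ E] {S : Set E} {s : E}
    (h : s ∈ S) : s ∈ coneHull S :=
  ⟨1, zero_le_one, s, h, (one_smul ℝ s).symm⟩

lemma coneHull_mono {E : Type*} [AddCommGroup E] [Module ℝ E] {S T : Set E}
    (h : S ⊆ T) : coneHull S ⊆ coneHull T := by
  rintro x ⟨t, ht, s, hs, rfl⟩
  exact ⟨t, ht, s, h hs, rfl⟩

lemma seg_mem_qri {X : Type*} [AddCommGroup X] [Module ℝ X] [TopologicalSpace X]
    (U : Set X) (hconv : Convex ℝ U)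
    {x : X} (hx : x ∈ qri U) {u : X} (hu : u ∈ U) {s : ℝ} (hs0 : 0 ≤ s) (hs1 : s < 1) :
    (1 - s) • x + s • u ∈ qri U := by
  obtain ⟨hxU, M, hM⟩ := hx
  set z := (1 - s) • x + s • u with hz
  have hzU : z ∈ U := hconv hxU hu (by linarith) hs0 (by ring)
  have hMclosed : IsClosed (M : Set X) := hM ▸ isClosed_closure
  have hsubM : U - {x} ⊆ (M : Set X) := fun v hv => by
    rw [← hM]; exact subset_closure (mem_coneHull_of_mem hv)
  have huxM : u - x ∈ M := hsubM ⟨u, hu, x, rfl, rfl⟩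
  refine ⟨hzU, M, subset_antisymm ?_ ?_⟩
  · apply closure_minimal _ hMclosed
    rintro v ⟨t, ht, w, hw, rfl⟩
    rw [Set.sub_singleton] at hw
    obtain ⟨a, ha, rfl⟩ := hw
    have haxM : a - x ∈ M := hsubM ⟨a, ha, x, rfl, rfl⟩
    have key : a - z = (a - x) - s • (u - x) := by rw [hz]; module
    have : a - z ∈ M := key ▸ M.sub_mem haxM (M.smul_mem s huxM)
    exact M.smul_mem t this
  · rw [← hM]
    apply closure_mono
    rintro v ⟨t, ht, w, hw, rfl⟩
    rw [Set.sub_singleton] at hw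
    obtain ⟨a, ha, rfl⟩ := hw
    have hpU : (1 - s) • a + s • u ∈ U := hconv ha hu (by linarith) hs0 (by ring)
    refine ⟨t / (1 - s), div_nonneg ht (by linarith), ((1 - s) • a + s • u) - z,
      ⟨(1 - s) • a + s • u, hpU, z, rfl, rfl⟩, ?_⟩
    have hkey : ((1 - s) • a + s • u) - z = (1 - s) • (a - x) := by rw [hz]; module
    rw [hkey, smul_smul, div_mul_cancel₀]
    linarith

theorem closure_coneHull_qri_eq
    {X : Type*} [AddCommGroup X] [Module ℝ X] [TopologicalSpace X]
    [IsTopologicalAddGroup X] [ContinuousSMul ℝ X] [LocallyConvexSpace ℝ X] [T2Space X]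
    (U : Set X) (hne : U.Nonempty) (hconv : Convex ℝ U) (hqri : (qri U).Nonempty) :
    closure (coneHull (qri U)) = closure (coneHull U) := by
  obtain ⟨x, hx⟩ := hqri
  apply subset_antisymm
  · exact closure_mono (coneHull_mono fun y hy => hy.1)
  · apply closure_minimal _ isClosed_closure
    rintro v ⟨t, ht, u, hu, rfl⟩
    have huc : u ∈ closure (qri U) := by
      have hcont : Continuous (fun s : ℝ => (1 - s) • x + s • u) := by continuity
      have htend : Filter.Tendsto (fun s : ℝ => (1 - s) • x + s • u) (𝓝[<] (1 : ℝ)) (𝓝 u) := by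
        have h1 := hcont.tendsto 1
        simpa using h1.mono_left nhdsWithin_le_nhds
      refine mem_closure_of_tendsto htend ?_
      filter_upwards [Ioo_mem_nhdsLT (by norm_num : (0 : ℝ) < 1)] with s hs
      exact seg_mem_qri U hconv hx hu hs.1.le hs.2
    exact map_mem_closure (continuous_const_smul t) huc fun y hy => ⟨t, ht, y, hy, rfl⟩
end

section
/- Let U be a nonempty convex subset of a separated locally convex space X and x ∈ U. If x ∉ qri(U), then there exists a nonzero continuous linear functional x* ∈ X* such that ⟨x*, y⟩ ≤ ⟨x*, x⟩ for all y ∈ U. -/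
open Set Pointwise Topology

lemma coneHull_convex {E : Type*} [AddCommGroup E] [Module ℝ E] {S : Set E}
    (hS : Convex ℝ S) : Convex ℝ (coneHull S) := by
  rintro p ⟨t, ht, s, hs, rfl⟩ q ⟨t', ht', s', hs', rfl⟩ a b ha hb hab
  rcases eq_or_lt_of_le (by positivity : (0:ℝ) ≤ a * t + b * t') with h | h
  · have h1 : a * t = 0 ∧ b * t' = 0 := by
      constructor <;> nlinarith [mul_nonneg ha ht, mul_nonneg hb ht']
    refine ⟨0, le_refl 0, s, hs, ?_⟩
    rw [smul_smul, smul_smul, h1.1, h1.2]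
    simp
  · set τ := a * t + b * t' with hτ
    refine ⟨τ, le_of_lt h, (a * t / τ) • s + (b * t' / τ) • s',
      hS hs hs' (by positivity) (by positivity) (by field_simp; exact hτ.symm), ?_⟩
    rw [smul_add, smul_smul, smul_smul, smul_smul, smul_smul]
    have hτ0 : τ ≠ 0 := ne_of_gt h
    field_simp

lemma coneHull_smul_mem {E : Type*} [AddCommGroup E] [Module ℝ E] {S : Set E}
    {t : ℝ} (ht : 0 ≤ t) {z : E} (hz : z ∈ coneHull S) : t • z ∈ coneHull S := by
  obtain ⟨t', ht', s, hs, rfl⟩ := hz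
  exact ⟨t * t', mul_nonneg ht ht', s, hs, smul_smul t t' s⟩

theorem separation_of_not_mem_qri
    {X : Type*} [AddCommGroup X] [Module ℝ X] [TopologicalSpace X]
    [IsTopologicalAddGroup X] [ContinuousSMul ℝ X] [LocallyConvexSpace ℝ X] [T2Space X]
    (U : Set X) (hne : U.Nonempty) (hconv : Convex ℝ U) (x : X) (hx : x ∈ U)
    (hxqri : x ∉ qri U) :
    ∃ f : X →L[ℝ] ℝ, f ≠ 0 ∧ ∀ y ∈ U, f y ≤ f x := by
  set K := coneHull (U - {x}) with hK
  set C := closure K with hC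
  -- basic facts
  have hKconv : Convex ℝ K := coneHull_convex ((hconv.sub (convex_singleton x)))
  have hCconv : Convex ℝ C := hKconv.closure
  have h0K : (0 : X) ∈ K := ⟨0, le_refl 0, x - x, Set.sub_mem_sub hx rfl, by simp⟩
  have h0C : (0 : X) ∈ C := subset_closure h0K
  have hCsmul : ∀ {t : ℝ}, 0 ≤ t → ∀ {z : X}, z ∈ C → t • z ∈ C := by
    intro t ht z hz
    exact map_mem_closure (continuous_const_smul t) hz
      (fun w hw => coneHull_smul_mem ht hw)
  -- there is z ∈ C with -z ∉ C
  have hCadd : ∀ {a b : X}, a ∈ C → b ∈ C → a + b ∈ C := by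
    intro a b ha hb
    have hmid : (1/2 : ℝ) • a + (1/2 : ℝ) • b ∈ C :=
      hCconv ha hb (by norm_num) (by norm_num) (by norm_num)
    have := hCsmul (by norm_num : (0:ℝ) ≤ 2) hmid
    rwa [smul_add, smul_smul, smul_smul, show (2:ℝ) * (1/2) = 1 by norm_num,
      one_smul, one_smul] at this
  obtain ⟨z, hzC, hznC⟩ : ∃ z ∈ C, -z ∉ C := by
    by_contra hcon
    push_neg at hcon
    apply hxqri
    refine ⟨hx, ⟨⟨⟨⟨C, fun ha hb => hCadd ha hb⟩, h0C⟩, ?_⟩, rfl⟩⟩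
    intro c z hz
    rcases le_or_gt 0 c with hc | hc
    · exact hCsmul hc hz
    · have : (-c) • (-z) ∈ C := hCsmul (by linarith) (hcon z hz)
      rwa [smul_neg, neg_smul, neg_neg] at this
  -- separate -z from C
  obtain ⟨f, u, hfu, hfz⟩ := geometric_hahn_banach_closed_point hCconv isClosed_closure hznC
  have hfle : ∀ a ∈ C, f a ≤ 0 := by
    intro a ha
    by_contra hpos
    push_neg at hpos
    have ht : (0:ℝ) ≤ (|u| + 1) / f a := by positivity
    have h1 := hfu _ (hCsmul ht ha)
    rw [map_smul, smul_eq_mul, div_mul_cancel₀ _ (ne_of_gt hpos)] at h1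
    linarith [le_abs_self u]
  have hfzneg : f z < 0 := by
    have h0 : (0:ℝ) < u := by simpa using hfu 0 h0C
    have := hfz
    rw [map_neg] at this
    linarith [hfle z hzC]
  refine ⟨f, ?_, ?_⟩
  · intro h; rw [h] at hfzneg; simp at hfzneg
  · intro y hy
    have : f (y - x) ≤ 0 :=
      hfle _ (subset_closure ⟨1, zero_le_one, y - x, Set.sub_mem_sub hy rfl, (one_smul ℝ _).symm⟩)
    rw [map_sub] at this
    linarith
end

section
/- Let f, g : X → ℝ ∪ {+∞} be proper functions on a separated locally convex space X with v := inf_x {f(x)+g(x)} ∈ ℝ, and suppose the set E := epi f − ep̂i(g − v) = {(x − y, f(x) + g(y) − v + ε) : x ∈ dom f, y ∈ dom g, ε ≥ 0} is convex. If 0 ∈ qi(dom f − dom g) and (0,0) ∉ qri(co(E ∪ {(0,0)})), then v = max_{y*∈X*}{−f*(−y*) − g*(y*)}. -/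
open Set Pointwise Topology

section Aux
variable {E : Type*} [AddCommGroup E] [Module ℝ E]

omit [Module ℝ E] in
lemma sub_singleton_zero (S : Set E) : S - {(0 : E)} = S := by
  ext z; simp [Set.mem_sub]

lemma mem_coneHull_self {S : Set E} {x : E} (hx : x ∈ S) : x ∈ coneHull S :=
  ⟨1, zero_le_one, x, hx, (one_smul ℝ x).symm⟩

lemma zero_mem_coneHull {S : Set E} (hS : S.Nonempty) : (0 : E) ∈ coneHull S := by
  obtain ⟨s, hs⟩ := hS
  exact ⟨0, le_refl _, s, hs, (zero_smul ℝ s).symm⟩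

lemma smul_mem_coneHull {S : Set E} {x : E} {t : ℝ} (ht : 0 ≤ t) (hx : x ∈ coneHull S) :
    t • x ∈ coneHull S := by
  obtain ⟨s, hs, y, hy, rfl⟩ := hx
  exact ⟨t * s, mul_nonneg ht hs, y, hy, (smul_smul t s y)⟩

lemma convex_coneHull {S : Set E} (hS : Convex ℝ S) (h0 : (0 : E) ∈ S) :
    Convex ℝ (coneHull S) := by
  rintro p ⟨t, ht, c, hc, rfl⟩ q ⟨s, hs, d, hd, rfl⟩ a b ha hb hab
  rcases eq_or_lt_of_le (add_nonneg (mul_nonneg ha ht) (mul_nonneg hb hs)) with hr | hr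
  · have h1 : a * t = 0 := by nlinarith [mul_nonneg ha ht, mul_nonneg hb hs]
    have h2 : b * s = 0 := by nlinarith [mul_nonneg ha ht, mul_nonneg hb hs]
    have : a • t • c + b • s • d = 0 := by
      rw [smul_smul, smul_smul, h1, h2, zero_smul, zero_smul, add_zero]
    rw [this]
    exact zero_mem_coneHull ⟨0, h0⟩
  · set r := a * t + b * s with hrdef
    refine ⟨r, le_of_lt hr, (a * t / r) • c + (b * s / r) • d,
      hS hc hd (div_nonneg (mul_nonneg ha ht) hr.le) (div_nonneg (mul_nonneg hb hs) hr.le)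
        (by field_simp; exact hrdef.symm), ?_⟩
    rw [smul_add, smul_smul, smul_smul, smul_smul, smul_smul]
    rw [mul_div_cancel₀ _ (ne_of_gt hr), mul_div_cancel₀ _ (ne_of_gt hr)]

lemma smul_mem_closure_coneHull [TopologicalSpace E] [ContinuousSMul ℝ E]
    {S : Set E} {x : E} {t : ℝ} (ht : 0 ≤ t) (hx : x ∈ closure (coneHull S)) :
    t • x ∈ closure (coneHull S) := by
  have hm : Set.MapsTo (fun z : E => t • z) (coneHull S) (coneHull S) :=
    fun y hy => smul_mem_coneHull ht hy
  exact hm.closure (continuous_const_smul t) hx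

end Aux

/-- Separation: if `C` is convex, contains `0`, and the closed conic hull of `C`
is not a linear subspace, there is a continuous linear functional nonpositive on `C`
and strictly negative somewhere on `C`. -/
lemma exists_separating_functional {E : Type*} [AddCommGroup E] [Module ℝ E]
    [TopologicalSpace E] [IsTopologicalAddGroup E] [ContinuousSMul ℝ E]
    [LocallyConvexSpace ℝ E]
    {C : Set E} (hC : Convex ℝ C) (h0 : (0 : E) ∈ C)
    (h : ¬ ∃ M : Submodule ℝ E, closure (coneHull (C - {0})) = (M : Set E)) :
    ∃ φ : E →L[ℝ] ℝ, (∀ c ∈ C, φ c ≤ 0) ∧ ∃ c ∈ C, φ c < 0 := by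
  rw [sub_singleton_zero] at h
  set K := closure (coneHull C) with hK
  have hKconv : Convex ℝ K := (convex_coneHull hC h0).closure
  have hKsmul : ∀ t : ℝ, 0 ≤ t → ∀ x ∈ K, t • x ∈ K :=
    fun t ht x hx => smul_mem_closure_coneHull ht hx
  have hK0 : (0 : E) ∈ K := subset_closure (zero_mem_coneHull ⟨0, h0⟩)
  have hKadd : ∀ x ∈ K, ∀ y ∈ K, x + y ∈ K := by
    intro x hx y hy
    have hmid : (1/2 : ℝ) • x + (1/2 : ℝ) • y ∈ K :=
      hKconv hx hy (by norm_num) (by norm_num) (by norm_num)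
    have := hKsmul 2 (by norm_num) _ hmid
    rwa [smul_add, smul_smul, smul_smul, show (2 : ℝ) * (1/2) = 1 by norm_num,
      one_smul, one_smul] at this
  -- there is k ∈ K with -k ∉ K
  have hk : ∃ k ∈ K, -k ∉ K := by
    by_contra hcon
    push_neg at hcon
    exact h ⟨{ carrier := K
               add_mem' := fun ha hb => hKadd _ ha _ hb
               zero_mem' := hK0
               smul_mem' := by
                 intro c x hx
                 rcases le_or_gt 0 c with hc | hc
                 · exact hKsmul c hc x hx
                 · have : c • x = (-c) • (-x) := by rw [smul_neg, neg_smul, neg_neg]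
                   rw [this]
                   exact hKsmul (-c) (by linarith) _ (hcon x hx) }, rfl⟩
  obtain ⟨k, hkK, hknK⟩ := hk
  obtain ⟨φ, u, hφ, hu⟩ :=
    geometric_hahn_banach_closed_point hKconv isClosed_closure hknK
  have hu0 : 0 < u := by simpa using hφ 0 hK0
  -- φ ≤ 0 on K
  have hφK : ∀ a ∈ K, φ a ≤ 0 := by
    intro a ha
    by_contra hpos
    push_neg at hpos
    have ht : (0 : ℝ) ≤ (u + 1) / φ a := by positivity
    have := hφ _ (hKsmul _ ht a ha)
    rw [map_smul, smul_eq_mul, div_mul_cancel₀ _ (ne_of_gt hpos)] at this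
    linarith
  -- strict negativity at some c ∈ C
  have hφk : φ k < 0 := by
    have := hφ (-k)  -- not in K though; use hu : u < φ (-k)
    have : u < φ (-k) := hu
    rw [map_neg] at this
    linarith
  have hopen : IsOpen {z : E | φ z < 0} := isOpen_lt φ.continuous continuous_const
  obtain ⟨p, hp1, hp2⟩ := (_root_.mem_closure_iff.1 hkK) _ hopen hφk
  obtain ⟨t, ht, c, hc, rfl⟩ := hp2
  rw [Set.mem_setOf_eq, map_smul, smul_eq_mul] at hp1
  have hφc : φ c < 0 := by
    rcases eq_or_lt_of_le ht with h'|h'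
    · exfalso; rw [← h', zero_mul] at hp1; exact lt_irrefl _ hp1
    · nlinarith
  exact ⟨φ, fun c hc => (by simpa using hφK c (subset_closure (mem_coneHull_self hc))),
    c, hc, hφc⟩
theorem fenchel_duality_of_qi_qri
    {X : Type*} [AddCommGroup X] [Module ℝ X] [TopologicalSpace X]
    [IsTopologicalAddGroup X] [ContinuousSMul ℝ X] [LocallyConvexSpace ℝ X] [T2Space X]
    (f g : X → EReal)
    (hfbot : ∀ x, f x ≠ ⊥) (hgbot : ∀ x, g x ≠ ⊥)
    (hfdom : ∃ x, f x ≠ ⊤) (hgdom : ∃ x, g x ≠ ⊤)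
    (v : ℝ) (hv : (⨅ x : X, f x + g x) = (v : EReal))
    (hconvE : Convex ℝ {p : X × ℝ | ∃ x y : X, ∃ ε : ℝ, 0 ≤ ε ∧ p.1 = x - y ∧
      (p.2 : EReal) = f x + g y - (v : EReal) + (ε : EReal)})
    (hqi : (0 : X) ∈ qi ({x : X | f x ≠ ⊤} - {x : X | g x ≠ ⊤}))
    (hqri : ((0 : X), (0 : ℝ)) ∉ qri (convexHull ℝ
      ({p : X × ℝ | ∃ x y : X, ∃ ε : ℝ, 0 ≤ ε ∧ p.1 = x - y ∧
        (p.2 : EReal) = f x + g y - (v : EReal) + (ε : EReal)} ∪ {(0, 0)}))) :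
    ∃ ystar : X →L[ℝ] ℝ,
      (-(⨆ x : X, (((-ystar) x : ℝ) : EReal) - f x)
        - (⨆ x : X, ((ystar x : ℝ) : EReal) - g x) = (v : EReal)) ∧
      ∀ zstar : X →L[ℝ] ℝ,
        -(⨆ x : X, (((-zstar) x : ℝ) : EReal) - f x)
          - (⨆ x : X, ((zstar x : ℝ) : EReal) - g x) ≤ (v : EReal) := by
  classical
  obtain ⟨x0, hx0⟩ := hfdom
  obtain ⟨y0, hy0⟩ := hgdom
  set Eset : Set (X × ℝ) := {p : X × ℝ | ∃ x y : X, ∃ ε : ℝ, 0 ≤ ε ∧ p.1 = x - y ∧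
      (p.2 : EReal) = f x + g y - (v : EReal) + (ε : EReal)} with hEsetdef
  set C : Set (X × ℝ) := convexHull ℝ (Eset ∪ {((0:X), (0:ℝ))}) with hCdef
  have h0C : ((0:X), (0:ℝ)) ∈ C := subset_convexHull ℝ _ (Or.inr rfl)
  have hEC : Eset ⊆ C := Set.subset_union_left.trans (subset_convexHull ℝ _)
  have hCconv : Convex ℝ C := convex_convexHull ℝ _
  -- non-bottom of the conjugate suprema
  have hsupf : ∀ z : X →L[ℝ] ℝ, (⨆ x : X, ((z x : ℝ) : EReal) - f x) ≠ ⊥ := by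
    intro z
    have hle : ((z x0 - (f x0).toReal : ℝ) : EReal) ≤ ⨆ x : X, ((z x : ℝ) : EReal) - f x := by
      rw [EReal.coe_sub, EReal.coe_toReal hx0 (hfbot x0)]
      exact le_iSup (fun x => ((z x : ℝ) : EReal) - f x) x0
    intro hbot
    rw [hbot, le_bot_iff] at hle
    exact EReal.coe_ne_bot _ hle
  have hsupg : ∀ z : X →L[ℝ] ℝ, (⨆ x : X, ((z x : ℝ) : EReal) - g x) ≠ ⊥ := by
    intro z
    have hle : ((z y0 - (g y0).toReal : ℝ) : EReal) ≤ ⨆ x : X, ((z x : ℝ) : EReal) - g x := by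
      rw [EReal.coe_sub, EReal.coe_toReal hy0 (hgbot y0)]
      exact le_iSup (fun x => ((z x : ℝ) : EReal) - g x) y0
    intro hbot
    rw [hbot, le_bot_iff] at hle
    exact EReal.coe_ne_bot _ hle
  -- membership of canonical points in Eset
  have hmem : ∀ x y : X, f x ≠ ⊤ → g y ≠ ⊤ → ∀ ε : ℝ, 0 ≤ ε →
      ((x - y, (f x).toReal + (g y).toReal - v + ε) : X × ℝ) ∈ Eset := by
    intro x y hx hy ε hε
    refine ⟨x, y, ε, hε, rfl, ?_⟩
    conv_rhs => rw [← EReal.coe_toReal hx (hfbot x), ← EReal.coe_toReal hy (hgbot y)]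
    norm_cast
  -- weak duality
  have hweak : ∀ z : X →L[ℝ] ℝ,
      -(⨆ x : X, (((-z) x : ℝ) : EReal) - f x)
        - (⨆ x : X, ((z x : ℝ) : EReal) - g x) ≤ (v : EReal) := by
    intro z
    set A := ⨆ x : X, (((-z) x : ℝ) : EReal) - f x with hA
    set B := ⨆ x : X, ((z x : ℝ) : EReal) - g x with hB
    have hsum : -(v : EReal) ≤ A + B := by
      by_contra hlt
      push_neg at hlt
      obtain ⟨w, hw1, hw2⟩ := EReal.exists_between_coe_real hlt
      rw [← EReal.coe_neg, EReal.coe_lt_coe_iff] at hw2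
      have hinf : (⨅ x : X, f x + g x) < ((-w : ℝ) : EReal) := by
        rw [hv, EReal.coe_lt_coe_iff]; linarith
      obtain ⟨x, hx⟩ := iInf_lt_iff.1 hinf
      have hfx : f x ≠ ⊤ := by
        intro h'; rw [h', EReal.top_add_of_ne_bot (hgbot x)] at hx; exact not_top_lt hx
      have hgx : g x ≠ ⊤ := by
        intro h'; rw [h', EReal.add_top_of_ne_bot (hfbot x)] at hx; exact not_top_lt hx
      have h1 : (((f x).toReal + (g x).toReal : ℝ) : EReal) = f x + g x := by
        push_cast
        rw [EReal.coe_toReal hfx (hfbot x), EReal.coe_toReal hgx (hgbot x)]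
      have hab : (f x).toReal + (g x).toReal < -w :=
        EReal.coe_lt_coe_iff.1 (h1 ▸ hx)
      have hA2 : (((-z) x - (f x).toReal : ℝ) : EReal) ≤ A := by
        rw [EReal.coe_sub, EReal.coe_toReal hfx (hfbot x)]
        exact le_iSup (fun x => (((-z) x : ℝ) : EReal) - f x) x
      have hB2 : ((z x - (g x).toReal : ℝ) : EReal) ≤ B := by
        rw [EReal.coe_sub, EReal.coe_toReal hgx (hgbot x)]
        exact le_iSup (fun x => ((z x : ℝ) : EReal) - g x) x
      have hAB : ((((-z) x - (f x).toReal) + (z x - (g x).toReal) : ℝ) : EReal) ≤ A + B := by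
        rw [EReal.coe_add]; exact add_le_add hA2 hB2
      have hlt2 : ((((-z) x - (f x).toReal) + (z x - (g x).toReal) : ℝ) : EReal) < (w : EReal) :=
        lt_of_le_of_lt hAB hw1
      rw [EReal.coe_lt_coe_iff] at hlt2
      simp only [ContinuousLinearMap.neg_apply] at hlt2
      linarith
    have hne : -A - B = -(A + B) :=
      (EReal.neg_add (Or.inl (hsupf (-z))) (Or.inr (hsupg z))).symm
    rw [hne, EReal.neg_le]
    exact hsum
  -- separation
  have hnM : ¬ ∃ M : Submodule ℝ (X × ℝ),
      closure (coneHull (C - {(0 : X × ℝ)})) = (M : Set (X × ℝ)) := by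
    rintro ⟨M, hM⟩
    exact hqri ⟨h0C, M, hM⟩
  obtain ⟨φ, hφle, c₀, hc₀C, hφc₀⟩ := exists_separating_functional hCconv h0C hnM
  set xs : X →L[ℝ] ℝ := φ.comp (ContinuousLinearMap.inl ℝ X ℝ) with hxs
  set lam : ℝ := φ ((0:X), (1:ℝ)) with hlamdef
  have hsplit : ∀ p : X × ℝ, φ p = xs p.1 + p.2 * lam := by
    intro p
    have hp : p = ((p.1, (0:ℝ)) : X × ℝ) + p.2 • ((0:X), (1:ℝ)) := by
      ext <;> simp
    conv_lhs => rw [hp]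
    rw [map_add, map_smul, smul_eq_mul]
    simp [hxs, hlamdef]
  have hkey : ∀ x y : X, f x ≠ ⊤ → g y ≠ ⊤ → ∀ ε : ℝ, 0 ≤ ε →
      xs (x - y) + ((f x).toReal + (g y).toReal - v + ε) * lam ≤ 0 := by
    intro x y hx hy ε hε
    have h1 := hφle _ (hEC (hmem x y hx hy ε hε))
    rwa [hsplit] at h1
  have hlam0 : lam ≤ 0 := by
    by_contra hpos
    push_neg at hpos
    set A0 := xs (x0 - y0) with hA0
    set r0 := (f x0).toReal + (g y0).toReal - v with hr0
    set ε0 := max 0 ((1 - A0 - r0 * lam) / lam) with hε0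
    have hε0n : 0 ≤ ε0 := le_max_left _ _
    have h1 : (1 - A0 - r0 * lam) / lam ≤ ε0 := le_max_right _ _
    have h2 : 1 - A0 - r0 * lam ≤ ε0 * lam := by
      calc 1 - A0 - r0 * lam = ((1 - A0 - r0 * lam) / lam) * lam :=
            (div_mul_cancel₀ _ (ne_of_gt hpos)).symm
        _ ≤ ε0 * lam := mul_le_mul_of_nonneg_right h1 hpos.le
    have h3 := hkey x0 y0 hx0 hy0 ε0 hε0n
    have h4 : (r0 + ε0) * lam = r0 * lam + ε0 * lam := by ring
    rw [h4] at h3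
    linarith
  rcases hlam0.lt_or_eq with hneg | hzero
  · -- lam < 0 : strong duality
    set ys : X →L[ℝ] ℝ := (1/lam) • xs with hys
    have hysap : ∀ z : X, ys z = (1/lam) * xs z := fun z => rfl
    have hkey2 : ∀ x y : X, f x ≠ ⊤ → g y ≠ ⊤ →
        ys y - ys x ≤ (f x).toReal + (g y).toReal - v := by
      intro x y hx hy
      have h1 := hkey x y hx hy 0 le_rfl
      rw [add_zero, map_sub] at h1
      have h2 : ys y - ys x = (xs y - xs x) / lam := by
        rw [hysap, hysap]; ring
      rw [h2, div_le_iff_of_neg hneg]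
      linarith
    have hstrong : (⨆ x : X, (((-ys) x : ℝ) : EReal) - f x)
        + (⨆ x : X, ((ys x : ℝ) : EReal) - g x) ≤ -(v : EReal) := by
      apply EReal.add_le_of_forall_lt
      intro a' ha' b' hb'
      rw [lt_iSup_iff] at ha' hb'
      obtain ⟨x, hx⟩ := ha'
      obtain ⟨y, hy⟩ := hb'
      have hfx : f x ≠ ⊤ := by
        intro h'; rw [h'] at hx
        simp only [EReal.sub_top] at hx
        exact not_lt_bot hx
      have hgy : g y ≠ ⊤ := by
        intro h'; rw [h'] at hy
        simp only [EReal.sub_top] at hy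
        exact not_lt_bot hy
      have hx' : a' ≤ (((-ys) x - (f x).toReal : ℝ) : EReal) := by
        rw [EReal.coe_sub, EReal.coe_toReal hfx (hfbot x)]; exact hx.le
      have hy' : b' ≤ ((ys y - (g y).toReal : ℝ) : EReal) := by
        rw [EReal.coe_sub, EReal.coe_toReal hgy (hgbot y)]; exact hy.le
      calc a' + b' ≤ (((-ys) x - (f x).toReal : ℝ) : EReal)
            + ((ys y - (g y).toReal : ℝ) : EReal) := add_le_add hx' hy'
        _ = ((((-ys) x - (f x).toReal) + (ys y - (g y).toReal) : ℝ) : EReal) :=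
            (EReal.coe_add _ _).symm
        _ ≤ -(v : EReal) := by
            rw [← EReal.coe_neg, EReal.coe_le_coe_iff]
            have hk := hkey2 x y hfx hgy
            simp only [ContinuousLinearMap.neg_apply]
            linarith
    refine ⟨ys, ?_, hweak⟩
    refine le_antisymm (hweak ys) ?_
    have hne : -(⨆ x : X, (((-ys) x : ℝ) : EReal) - f x)
        - (⨆ x : X, ((ys x : ℝ) : EReal) - g x)
        = -((⨆ x : X, (((-ys) x : ℝ) : EReal) - f x)
          + (⨆ x : X, ((ys x : ℝ) : EReal) - g x)) :=
      (EReal.neg_add (Or.inl (hsupf (-ys))) (Or.inr (hsupg ys))).symm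
    rw [hne]
    exact EReal.le_neg_of_le_neg hstrong
  · -- lam = 0 : contradiction with qi hypothesis
    exfalso
    have hD : ∀ z ∈ ({x : X | f x ≠ ⊤} - {x : X | g x ≠ ⊤}), xs z ≤ 0 := by
      rintro z ⟨x, hx, y, hy, rfl⟩
      have h1 := hkey x y hx hy 0 le_rfl
      rw [hzero, mul_zero, add_zero] at h1
      exact h1
    have hcone : ∀ z ∈ coneHull ({x : X | f x ≠ ⊤} - {x : X | g x ≠ ⊤}), xs z ≤ 0 := by
      rintro z ⟨t, ht, s, hs, rfl⟩
      rw [map_smul, smul_eq_mul]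
      exact mul_nonpos_iff.2 (Or.inl ⟨ht, hD s hs⟩)
    have hcl : closure (coneHull (({x : X | f x ≠ ⊤} - {x : X | g x ≠ ⊤}) - {(0:X)}))
        = Set.univ := hqi.2
    rw [sub_singleton_zero] at hcl
    have hclos : ∀ z : X, xs z ≤ 0 := by
      intro z
      have hz : z ∈ closure (coneHull ({x : X | f x ≠ ⊤} - {x : X | g x ≠ ⊤})) := by
        rw [hcl]; trivial
      have hsub : closure (coneHull ({x : X | f x ≠ ⊤} - {x : X | g x ≠ ⊤}))
          ⊆ {w : X | xs w ≤ 0} :=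
        closure_minimal (fun w hw => hcone w hw)
          (isClosed_le xs.continuous continuous_const)
      exact hsub hz
    have hxz : ∀ z : X, xs z = 0 := by
      intro z
      have h1 := hclos z
      have h2 := hclos (-z)
      rw [map_neg] at h2
      linarith
    rw [hsplit c₀, hxz c₀.1, hzero, mul_zero, add_zero] at hφc₀
    exact lt_irrefl 0 hφc₀
end
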